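/- Suppose A is a real n×n matrix, C is r×n, and there exists a symmetric positive definite P̂ such that Aᵀ P̂ + P̂ A − Cᵀ C is negative definite. Then with M = −(1/2) P̂⁻¹ Cᵀ, the matrix A + M C is Hurwitz. -/

import Mathlib

open Matrix

/-- Induced `l2` (spectral) operator norm of a real matrix. -/
noncomputable def opNorm {m n : ℕ} (M : Matrix (Fin m) (Fin n) ℝ) : ℝ :=
  ‖(LinearMap.toContinuousLinearMap (Matrix.toEuclideanLin M) :
      EuclideanSpace ℝ (Fin n) →L[ℝ] EuclideanSpace ℝ (Fin m))‖

/-- Smallest eigenvalue of a symmetric real matrix (via the Rayleigh quotient). -/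
noncomputable def lamMin {n : ℕ} (M : Matrix (Fin n) (Fin n) ℝ) : ℝ :=
  ⨅ x : {x : EuclideanSpace ℝ (Fin n) // ‖x‖ = 1},
    (inner ℝ ((Matrix.toEuclideanLin M) x.1) x.1 : ℝ)

/-- Largest eigenvalue of a symmetric real matrix (via the Rayleigh quotient). -/
noncomputable def lamMax {n : ℕ} (M : Matrix (Fin n) (Fin n) ℝ) : ℝ :=
  ⨆ x : {x : EuclideanSpace ℝ (Fin n) // ‖x‖ = 1},
    (inner ℝ ((Matrix.toEuclideanLin M) x.1) x.1 : ℝ)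

/-- A real matrix is Hurwitz if all its (complex) eigenvalues, i.e. the roots of its
characteristic polynomial over `ℂ`, have negative real part. -/
def IsHurwitz {ι : Type*} [Fintype ι] [DecidableEq ι] (A : Matrix ι ι ℝ) : Prop :=
  ∀ μ : ℂ, ((A.map (Complex.ofReal)).charpoly).IsRoot μ → μ.re < 0

lemma eigen_of_charpoly_root {n : ℕ} (A' : Matrix (Fin n) (Fin n) ℂ) (μ : ℂ)
    (h : A'.charpoly.IsRoot μ) : ∃ v : Fin n → ℂ, v ≠ 0 ∧ A' *ᵥ v = μ • v := by
  have hdet : (Matrix.scalar (Fin n) μ - A').det = 0 := by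
    rw [Polynomial.IsRoot, Matrix.charpoly, eval_det, matPolyEquiv_charmatrix,
      Polynomial.eval_sub, Polynomial.eval_X, Polynomial.eval_C] at h
    exact h
  obtain ⟨v, hv0, hv⟩ := (Matrix.exists_mulVec_eq_zero_iff).2 hdet
  refine ⟨v, hv0, ?_⟩
  rw [Matrix.sub_mulVec, sub_eq_zero] at hv
  rw [← hv]
  funext i
  rw [Matrix.scalar_apply]
  simp [Matrix.mulVec_diagonal]

lemma re_quad_pos {n : ℕ} {R : Matrix (Fin n) (Fin n) ℝ} (hR : R.PosDef)
    {v : Fin n → ℂ} (hv : v ≠ 0) :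
    0 < (star v ⬝ᵥ ((R.map (Complex.ofReal)) *ᵥ v)).re := by
  set a : Fin n → ℝ := fun i => (v i).re with ha
  set b : Fin n → ℝ := fun i => (v i).im with hb
  have key : (star v ⬝ᵥ ((R.map (Complex.ofReal)) *ᵥ v)).re
      = a ⬝ᵥ (R *ᵥ a) + b ⬝ᵥ (R *ᵥ b) := by
    simp only [dotProduct, mulVec, Pi.star_apply, map_apply, Complex.re_sum,
      Finset.mul_sum, ← Finset.sum_add_distrib]
    refine Finset.sum_congr rfl fun i _ => Finset.sum_congr rfl fun j _ => ?_
    simp [Complex.mul_re, Complex.mul_im, ha, hb]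
  rw [key]
  have hab : a ≠ 0 ∨ b ≠ 0 := by
    by_contra hcon
    push_neg at hcon
    apply hv
    funext i
    have h1 : a i = 0 := by rw [hcon.1]; rfl
    have h2 : b i = 0 := by rw [hcon.2]; rfl
    exact Complex.ext h1 h2
  rcases hab with h | h
  · have := hR.dotProduct_mulVec_pos h
    have h2 := hR.posSemidef.dotProduct_mulVec_nonneg b
    simp only [star_trivial] at this h2
    linarith
  · have := hR.dotProduct_mulVec_pos h
    have h2 := hR.posSemidef.dotProduct_mulVec_nonneg a
    simp only [star_trivial] at this h2
    linarith

/-- If `P̂ ≻ 0` and `Aᵀ P̂ + P̂ A − Cᵀ C ≺ 0`, then `A + M C` with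
`M = −(1/2) P̂⁻¹ Cᵀ` is Hurwitz. -/
theorem observer_gain_hurwitz {n r : ℕ} (A : Matrix (Fin n) (Fin n) ℝ)
    (C : Matrix (Fin r) (Fin n) ℝ) (Phat : Matrix (Fin n) (Fin n) ℝ)
    (hPhat : Phat.PosDef)
    (hLMI : (-(Aᵀ * Phat + Phat * A - Cᵀ * C)).PosDef) :
    IsHurwitz (A + (-((1/2 : ℝ) • (Phat⁻¹ * Cᵀ))) * C) := by
  intro μ hroot
  set F : Matrix (Fin n) (Fin n) ℝ := A + (-((1/2 : ℝ) • (Phat⁻¹ * Cᵀ))) * C with hF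
  -- invertibility of Phat
  have hPunit : IsUnit Phat.det := isUnit_iff_ne_zero.2 (ne_of_gt hPhat.det_pos)
  have hPsymm : Phatᵀ = Phat := hPhat.isHermitian
  have hPinv_symm : (Phat⁻¹)ᵀ = Phat⁻¹ := by
    rw [Matrix.transpose_nonsing_inv, hPsymm]
  -- Lyapunov identity
  have hLyap : Fᵀ * Phat + Phat * F = Aᵀ * Phat + Phat * A - Cᵀ * C := by
    have h1 : Phat * Phat⁻¹ = 1 := Matrix.mul_nonsing_inv _ hPunit
    have h2 : Phat⁻¹ * Phat = 1 := Matrix.nonsing_inv_mul _ hPunit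
    rw [hF]
    rw [Matrix.transpose_add, Matrix.transpose_mul, Matrix.transpose_neg,
      Matrix.transpose_smul, Matrix.transpose_mul, hPinv_symm, Matrix.transpose_transpose]
    have e1 : (Cᵀ * -((1/2:ℝ) • (C * Phat⁻¹))) * Phat = -((1/2:ℝ) • (Cᵀ * C)) := by
      rw [Matrix.mul_neg, Matrix.neg_mul, Matrix.mul_smul, Matrix.smul_mul,
        Matrix.mul_assoc, Matrix.mul_assoc, h2, Matrix.mul_one]
    have e2 : Phat * (-((1/2:ℝ) • (Phat⁻¹ * Cᵀ)) * C) = -((1/2:ℝ) • (Cᵀ * C)) := by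
      rw [Matrix.neg_mul, Matrix.mul_neg, Matrix.smul_mul, Matrix.mul_smul,
        ← Matrix.mul_assoc, ← Matrix.mul_assoc, h1, Matrix.one_mul]
    rw [Matrix.add_mul, Matrix.mul_add, e1, e2]
    module
  obtain ⟨v, hv0, hv⟩ := eigen_of_charpoly_root _ μ hroot
  set F' : Matrix (Fin n) (Fin n) ℂ := F.map Complex.ofReal with hF'
  set P' : Matrix (Fin n) (Fin n) ℂ := Phat.map Complex.ofReal with hP'
  set s : ℂ := star v ⬝ᵥ (P' *ᵥ v) with hs
  have hFconj : F'ᴴ = F'ᵀ := by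
    ext i j
    simp [conjTranspose_apply, Matrix.map_apply, Complex.conj_ofReal, hF']
  have hmapmul : ∀ (X Y : Matrix (Fin n) (Fin n) ℝ),
      (X * Y).map Complex.ofReal = X.map Complex.ofReal * Y.map Complex.ofReal :=
    fun X Y => Matrix.map_mul (f := Complex.ofRealHom)
  have h1 : star v ⬝ᵥ (((Phat * F).map Complex.ofReal) *ᵥ v) = μ * s := by
    rw [hmapmul, ← Matrix.mulVec_mulVec, hv, Matrix.mulVec_smul, dotProduct_smul]
    rw [hs, smul_eq_mul]
  have hvstar : F' *ᵥ star v = (starRingEnd ℂ μ) • star v := by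
    rw [← Matrix.vecMul_transpose, ← hFconj, ← Matrix.star_mulVec, hv]
    rw [star_smul]
    rfl
  have hgen : ∀ w : Fin n → ℂ, star v ⬝ᵥ ((F.map Complex.ofReal)ᵀ *ᵥ w)
      = (starRingEnd ℂ μ) * (star v ⬝ᵥ w) := by
    intro w
    rw [Matrix.dotProduct_mulVec, Matrix.vecMul_transpose, hvstar,
      smul_dotProduct, smul_eq_mul]
  have h2 : star v ⬝ᵥ (((Fᵀ * Phat).map Complex.ofReal) *ᵥ v) = (starRingEnd ℂ μ) * s := by
    rw [hmapmul, Matrix.transpose_map, ← Matrix.mulVec_mulVec, hgen, hs]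
  have hkey : ((2 * μ.re : ℝ) : ℂ) * s
      = - (star v ⬝ᵥ (((-(Aᵀ * Phat + Phat * A - Cᵀ * C)).map Complex.ofReal) *ᵥ v)) := by
    have hneg : (-(Aᵀ * Phat + Phat * A - Cᵀ * C)).map Complex.ofReal
        = - ((Aᵀ * Phat + Phat * A - Cᵀ * C).map Complex.ofReal) := by
      ext i j; simp [Matrix.map_apply]
    rw [hneg, Matrix.neg_mulVec, dotProduct_neg, neg_neg, ← hLyap]
    have hadd : (Fᵀ * Phat + Phat * F).map Complex.ofReal
        = (Fᵀ * Phat).map Complex.ofReal + (Phat * F).map Complex.ofReal := by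
      ext i j; simp [Matrix.map_apply]
    rw [hadd, Matrix.add_mulVec, dotProduct_add, h1, h2, ← add_mul,
      ← Complex.add_conj]
    ring
  have hs_pos : 0 < s.re := re_quad_pos hPhat hv0
  have hq_pos : 0 < (star v ⬝ᵥ (((-(Aᵀ * Phat + Phat * A - Cᵀ * C)).map Complex.ofReal) *ᵥ v)).re :=
    re_quad_pos hLMI hv0
  have hre : 2 * μ.re * s.re
      = - (star v ⬝ᵥ (((-(Aᵀ * Phat + Phat * A - Cᵀ * C)).map Complex.ofReal) *ᵥ v)).re := by
    have := congrArg Complex.re hkey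
    simpa [Complex.mul_re] using this
  nlinarith [hs_pos, hq_pos, hre]
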